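/- Fix N, a neutral replacement rule p° satisfying the fixation axiom, and u ∈ (0,1]. For each integer n ≥ 1, let φ_ij(n) := P_{π°(n)}[X_i = X_j] and φ_ijk(n) := P_{π°(n)}[X_i = X_j = X_k], where π°(n) is the unique stationary distribution of the neutral chain with n strategies. Then: (i) for all sites i, j there exist reals a_{ij}, b_{ij}, not depending on n, such that n·φ_ij(n) = a_{ij}·n + b_{ij} for every n ≥ 1; and (ii) for all sites i, j, k there exist reals c_{ijk}, d_{ijk}, e_{ijk}, not depending on n, such that n²·φ_ijk(n) = c_{ijk}·n² + d_{ijk}·n + e_{ijk} for every n ≥ 1. -/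

import Mathlib

open Finset

namespace SCT

abbrev Event (N : ℕ) := Finset (Fin N) × (Fin N → Fin N)

/-- The extension `α̃` of the parentage map of a replacement event:
it equals `α` on `R` and the identity off `R`. -/
def extMap {N : ℕ} (E : Event N) : Fin N → Fin N :=
  fun i => if i ∈ E.1 then E.2 i else i

/-- Transition probabilities of the mutation–selection Markov chain on states
`Fin N → Fin n`, for a replacement rule `p` and mutation probability `u`. -/
noncomputable def transMat (N n : ℕ) (p : Event N → ℝ) (u : ℝ)
    (x y : Fin N → Fin n) : ℝ :=
  ∑ E : Event N, p E *
    (∏ i ∈ E.1, ((1 - u) * (if y i = x (E.2 i) then (1:ℝ) else 0) + u / (n:ℝ))) *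
    (∏ i ∈ E.1ᶜ, (if y i = x i then (1:ℝ) else 0))

def IsDist {α : Type*} [Fintype α] (q : α → ℝ) : Prop :=
  (∀ a, 0 ≤ q a) ∧ ∑ a, q a = 1

def IsStationary {N n : ℕ} (P : (Fin N → Fin n) → (Fin N → Fin n) → ℝ)
    (π : (Fin N → Fin n) → ℝ) : Prop :=
  IsDist π ∧ ∀ y, ∑ x, π x * P x y = π y

/-- Fixation axiom: some site `i` can propagate its lineage through the whole
population via finitely many replacement events of positive probability. -/
def FixationAxiom {N : ℕ} (p : Event N → ℝ) : Prop :=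
  ∃ (i : Fin N) (m : ℕ) (E : Fin m → Event N), 1 ≤ m ∧
    (∀ k, 0 < p (E k)) ∧ (∃ k, i ∈ (E k).1) ∧
    ∀ j, ((List.ofFn (fun k => extMap (E k))).foldr (· ∘ ·) id) j = i

/-- Pairwise identity-by-state probability under the distribution `π`. -/
noncomputable def phi2 {N n : ℕ} (π : (Fin N → Fin n) → ℝ) (i j : Fin N) : ℝ :=
  ∑ x, π x * (if x i = x j then (1:ℝ) else 0)

/-- Triple identity-by-state probability under the distribution `π`. -/
noncomputable def phi3 {N n : ℕ} (π : (Fin N → Fin n) → ℝ) (i j k : Fin N) : ℝ :=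
  ∑ x, π x * (if x i = x j ∧ x j = x k then (1:ℝ) else 0)



-- Section A: indicator sums
lemma sum_ind1 {n : ℕ} (c : Fin n) : ∑ t : Fin n, (if t = c then (1:ℝ) else 0) = 1 := by
  simp

lemma sum_ind2 {n : ℕ} (c d : Fin n) :
    ∑ t : Fin n, (if t = c then (1:ℝ) else 0) * (if t = d then (1:ℝ) else 0)
      = if c = d then (1:ℝ) else 0 := by
  by_cases h : c = d
  · subst h; simp
  · rw [if_neg h]
    apply Finset.sum_eq_zero; intro t _
    by_cases ht : t = c
    · subst ht; simp [h]
    · simp [ht]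

lemma sum_ind2' {n : ℕ} (c d : Fin n) :
    ∑ t : Fin n, (if c = t then (1:ℝ) else 0) * (if d = t then (1:ℝ) else 0)
      = if c = d then (1:ℝ) else 0 := by
  rw [← sum_ind2 c d]
  apply Finset.sum_congr rfl; intro t _
  simp [eq_comm]

lemma sum_ind3 {n : ℕ} (c d e : Fin n) :
    ∑ t : Fin n, (if t = c then (1:ℝ) else 0) * (if t = d then (1:ℝ) else 0) * (if t = e then (1:ℝ) else 0)
      = if c = d ∧ d = e then (1:ℝ) else 0 := by
  by_cases h : c = d ∧ d = e
  · obtain ⟨h1, h2⟩ := h; subst h1; subst h2; simp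
  · rw [if_neg h]
    apply Finset.sum_eq_zero; intro t _
    by_cases h1 : t = c
    · by_cases h2 : t = d
      · by_cases h3 : t = e
        · exact absurd ⟨h1 ▸ h2.symm ▸ rfl, h2 ▸ h3.symm ▸ rfl⟩ h
        · simp [h3]
      · simp [h2]
    · simp [h1]

-- Section B: products over two/three distinguished points
lemma prod_two {M : Type*} [Fintype M] [DecidableEq M] (i j : M) (hij : i ≠ j)
    (f : M → ℝ) (hf : ∀ s, s ≠ i → s ≠ j → f s = 1) :
    ∏ s, f s = f i * f j := by
  rw [← Finset.mul_prod_erase univ f (mem_univ i),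
      ← Finset.mul_prod_erase (univ.erase i) f (by simp [hij.symm] : j ∈ univ.erase i)]
  have : ∏ s ∈ (univ.erase i).erase j, f s = 1 := by
    apply Finset.prod_eq_one; intro s hs
    simp only [mem_erase, mem_univ, and_true] at hs
    exact hf s hs.2 hs.1
  rw [this, mul_one]

lemma prod_three {M : Type*} [Fintype M] [DecidableEq M] (i j k : M)
    (hij : i ≠ j) (hik : i ≠ k) (hjk : j ≠ k)
    (f : M → ℝ) (hf : ∀ s, s ≠ i → s ≠ j → s ≠ k → f s = 1) :
    ∏ s, f s = f i * f j * f k := by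
  rw [← Finset.mul_prod_erase univ f (mem_univ i),
      ← Finset.mul_prod_erase (univ.erase i) f (by simp [hij.symm] : j ∈ univ.erase i),
      ← Finset.mul_prod_erase ((univ.erase i).erase j) f
        (by simp [hik.symm, hjk.symm] : k ∈ (univ.erase i).erase j)]
  have : ∏ s ∈ (((univ.erase i).erase j).erase k), f s = 1 := by
    apply Finset.prod_eq_one; intro s hs
    simp only [mem_erase, mem_univ, and_true] at hs
    exact hf s hs.2.2 hs.2.1 hs.1
  rw [this, mul_one]; ring


-- Section C: factorization of expectations of pair/triple indicators
lemma sum_states_pair {N n : ℕ} (h : Fin N → Fin n → ℝ) (i j : Fin N) (hij : i ≠ j)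
    (hsum : ∀ s, ∑ a, h s a = 1) :
    ∑ y : Fin N → Fin n, (∏ s, h s (y s)) * (if y i = y j then (1:ℝ) else 0)
      = ∑ t : Fin n, h i t * h j t := by
  have key : ∀ y : Fin N → Fin n,
      (∏ s, h s (y s)) * (if y i = y j then (1:ℝ) else 0)
        = ∑ t : Fin n, ∏ s, (h s (y s) *
            (if s = i then (if y s = t then (1:ℝ) else 0)
             else if s = j then (if y s = t then (1:ℝ) else 0) else 1)) := by
    intro y
    have h1 : ∀ t : Fin n, (∏ s, (h s (y s) *
            (if s = i then (if y s = t then (1:ℝ) else 0)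
             else if s = j then (if y s = t then (1:ℝ) else 0) else 1)))
        = (∏ s, h s (y s)) * ((if y i = t then (1:ℝ) else 0) * (if y j = t then (1:ℝ) else 0)) := by
      intro t
      rw [Finset.prod_mul_distrib]
      congr 1
      rw [prod_two i j hij _ (by intro s hsi hsj; simp [hsi, hsj])]
      simp [hij]
    rw [Finset.sum_congr rfl (fun t _ => h1 t), ← Finset.mul_sum, sum_ind2']
  rw [Finset.sum_congr rfl (fun y _ => key y), Finset.sum_comm]
  apply Finset.sum_congr rfl; intro t _
  have hfac := (Fintype.prod_sum (κ := fun _ : Fin N => Fin n)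
    (f := fun s a => h s a * (if s = i then (if a = t then (1:ℝ) else 0)
             else if s = j then (if a = t then (1:ℝ) else 0) else 1)))
  rw [← hfac]
  rw [prod_two i j hij _ (by
    intro s hsi hsj
    simp only [if_neg hsi, if_neg hsj, mul_one]
    exact hsum s)]
  congr 1
  · simp [Finset.sum_ite_eq', mul_ite]
  · simp [hij.symm, Finset.sum_ite_eq', mul_ite]

lemma sum_states_triple {N n : ℕ} (h : Fin N → Fin n → ℝ) (i j k : Fin N)
    (hij : i ≠ j) (hik : i ≠ k) (hjk : j ≠ k)
    (hsum : ∀ s, ∑ a, h s a = 1) :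
    ∑ y : Fin N → Fin n, (∏ s, h s (y s)) * (if y i = y j ∧ y j = y k then (1:ℝ) else 0)
      = ∑ t : Fin n, h i t * h j t * h k t := by
  have ind3 : ∀ y : Fin N → Fin n, (if y i = y j ∧ y j = y k then (1:ℝ) else 0)
      = ∑ t : Fin n, (if y i = t then (1:ℝ) else 0) * (if y j = t then (1:ℝ) else 0) *
          (if y k = t then (1:ℝ) else 0) := by
    intro y
    by_cases hc : y i = y j ∧ y j = y k
    · rw [if_pos hc]
      rw [Finset.sum_eq_single (y k)]
      · simp [hc.1.trans hc.2, hc.2]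
      · intro t _ ht
        simp [Ne.symm ht]
      · simp
    · rw [if_neg hc]
      symm; apply Finset.sum_eq_zero; intro t _
      by_cases h1 : y i = t
      · by_cases h2 : y j = t
        · by_cases h3 : y k = t
          · exact absurd ⟨h1.trans h2.symm, h2.trans h3.symm⟩ hc
          · simp [h3]
        · simp [h2]
      · simp [h1]
  have key : ∀ y : Fin N → Fin n,
      (∏ s, h s (y s)) * (if y i = y j ∧ y j = y k then (1:ℝ) else 0)
        = ∑ t : Fin n, ∏ s, (h s (y s) *
            (if s = i then (if y s = t then (1:ℝ) else 0)
             else if s = j then (if y s = t then (1:ℝ) else 0)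
             else if s = k then (if y s = t then (1:ℝ) else 0) else 1)) := by
    intro y
    have h1 : ∀ t : Fin n, (∏ s, (h s (y s) *
            (if s = i then (if y s = t then (1:ℝ) else 0)
             else if s = j then (if y s = t then (1:ℝ) else 0)
             else if s = k then (if y s = t then (1:ℝ) else 0) else 1)))
        = (∏ s, h s (y s)) * ((if y i = t then (1:ℝ) else 0) * (if y j = t then (1:ℝ) else 0) *
            (if y k = t then (1:ℝ) else 0)) := by
      intro t
      rw [Finset.prod_mul_distrib]
      congr 1
      rw [prod_three i j k hij hik hjk _ (by intro s h1 h2 h3; simp [h1, h2, h3])]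
      simp [hij, hik, hjk]
    rw [Finset.sum_congr rfl (fun t _ => h1 t), ← Finset.mul_sum, ← ind3 y]
  rw [Finset.sum_congr rfl (fun y _ => key y), Finset.sum_comm]
  apply Finset.sum_congr rfl; intro t _
  have hfac := (Fintype.prod_sum (κ := fun _ : Fin N => Fin n)
    (f := fun s a => h s a * (if s = i then (if a = t then (1:ℝ) else 0)
             else if s = j then (if a = t then (1:ℝ) else 0)
             else if s = k then (if a = t then (1:ℝ) else 0) else 1)))
  rw [← hfac]
  rw [prod_three i j k hij hik hjk _ (by
    intro s h1 h2 h3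
    simp only [if_neg h1, if_neg h2, if_neg h3, mul_one]
    exact hsum s)]
  congr 1
  · congr 1
    · simp [Finset.sum_ite_eq', mul_ite]
    · simp [hij.symm, Finset.sum_ite_eq', mul_ite]
  · simp [hik.symm, hjk.symm, Finset.sum_ite_eq', mul_ite]


-- Section D: transMat as a full product
def vv {N : ℕ} (u : ℝ) (E : Event N) (s : Fin N) : ℝ := if s ∈ E.1 then u else 0

lemma vv_nonneg {N : ℕ} {u : ℝ} (hu : 0 ≤ u) (E : Event N) (s : Fin N) : 0 ≤ vv u E s := by
  unfold vv; split <;> simp [hu]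

lemma vv_le {N : ℕ} {u : ℝ} (hu0 : 0 ≤ u) (hu1 : u ≤ 1) (E : Event N) (s : Fin N) : vv u E s ≤ 1 := by
  unfold vv; split <;> linarith

lemma transMat_eq {N : ℕ} (n : ℕ) (p : Event N → ℝ) (u : ℝ) (x y : Fin N → Fin n) :
    transMat N n p u x y = ∑ E : Event N, p E *
      ∏ s, ((1 - vv u E s) * (if y s = x (extMap E s) then (1:ℝ) else 0) + vv u E s / n) := by
  unfold transMat
  apply Finset.sum_congr rfl; intro E _
  rw [mul_assoc]
  congr 1
  rw [← Finset.prod_mul_prod_compl E.1]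
  congr 1
  · apply Finset.prod_congr rfl; intro s hs
    simp [vv, extMap, hs]
  · apply Finset.prod_congr rfl; intro s hs
    simp only [Finset.mem_compl] at hs
    simp [vv, extMap, hs]

lemma hsum_one {n : ℕ} (hn : 1 ≤ n) (v : ℝ) (c : Fin n) :
    ∑ a : Fin n, ((1 - v) * (if a = c then (1:ℝ) else 0) + v / n) = 1 := by
  have hn0 : (n:ℝ) ≠ 0 := Nat.cast_ne_zero.mpr (by omega)
  rw [Finset.sum_add_distrib, ← Finset.mul_sum, sum_ind1, Finset.sum_const, Finset.card_univ,
    Fintype.card_fin, nsmul_eq_mul]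
  field_simp
  ring

-- Section E: kernel computations
lemma sum_hh {n : ℕ} (hn : 1 ≤ n) (v1 v2 : ℝ) (c1 c2 : Fin n) :
    ∑ t : Fin n, ((1 - v1) * (if t = c1 then (1:ℝ) else 0) + v1 / n) *
        ((1 - v2) * (if t = c2 then (1:ℝ) else 0) + v2 / n)
      = (1 - v1) * (1 - v2) * (if c1 = c2 then (1:ℝ) else 0) + (1 - (1 - v1) * (1 - v2)) / n := by
  have hn0 : (n:ℝ) ≠ 0 := Nat.cast_ne_zero.mpr (by omega)
  have expand : ∀ t : Fin n, ((1 - v1) * (if t = c1 then (1:ℝ) else 0) + v1 / n) *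
        ((1 - v2) * (if t = c2 then (1:ℝ) else 0) + v2 / n)
      = (1 - v1) * (1 - v2) * ((if t = c1 then (1:ℝ) else 0) * (if t = c2 then (1:ℝ) else 0))
        + ((1 - v1) * (v2 / n)) * (if t = c1 then (1:ℝ) else 0)
        + ((v1 / n) * (1 - v2)) * (if t = c2 then (1:ℝ) else 0)
        + (v1 / n) * (v2 / n) := fun t => by ring
  rw [Finset.sum_congr rfl (fun t _ => expand t)]
  rw [Finset.sum_add_distrib, Finset.sum_add_distrib, Finset.sum_add_distrib,
    ← Finset.mul_sum, ← Finset.mul_sum, ← Finset.mul_sum, sum_ind2, sum_ind1, sum_ind1,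
    Finset.sum_const, Finset.card_univ, Fintype.card_fin, nsmul_eq_mul]
  field_simp
  ring

lemma sum_hhh {n : ℕ} (hn : 1 ≤ n) (v1 v2 v3 : ℝ) (c1 c2 c3 : Fin n) :
    ∑ t : Fin n, ((1 - v1) * (if t = c1 then (1:ℝ) else 0) + v1 / n) *
        ((1 - v2) * (if t = c2 then (1:ℝ) else 0) + v2 / n) *
        ((1 - v3) * (if t = c3 then (1:ℝ) else 0) + v3 / n)
      = (1 - v1) * (1 - v2) * (1 - v3) * (if c1 = c2 ∧ c2 = c3 then (1:ℝ) else 0)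
        + ((1 - v1) * (1 - v2) * v3 * (if c1 = c2 then (1:ℝ) else 0)
           + (1 - v1) * v2 * (1 - v3) * (if c1 = c3 then (1:ℝ) else 0)
           + v1 * (1 - v2) * (1 - v3) * (if c2 = c3 then (1:ℝ) else 0)) / n
        + ((1 - v1) * v2 * v3 + v1 * (1 - v2) * v3 + v1 * v2 * (1 - v3) + v1 * v2 * v3) / n ^ 2 := by
  have hn0 : (n:ℝ) ≠ 0 := Nat.cast_ne_zero.mpr (by omega)
  have expand : ∀ t : Fin n, ((1 - v1) * (if t = c1 then (1:ℝ) else 0) + v1 / n) *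
        ((1 - v2) * (if t = c2 then (1:ℝ) else 0) + v2 / n) *
        ((1 - v3) * (if t = c3 then (1:ℝ) else 0) + v3 / n)
      = (1 - v1) * (1 - v2) * (1 - v3) *
          ((if t = c1 then (1:ℝ) else 0) * (if t = c2 then (1:ℝ) else 0) * (if t = c3 then (1:ℝ) else 0))
        + ((1 - v1) * (1 - v2) * (v3 / n)) * ((if t = c1 then (1:ℝ) else 0) * (if t = c2 then (1:ℝ) else 0))
        + ((1 - v1) * (v2 / n) * (1 - v3)) * ((if t = c1 then (1:ℝ) else 0) * (if t = c3 then (1:ℝ) else 0))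
        + ((v1 / n) * (1 - v2) * (1 - v3)) * ((if t = c2 then (1:ℝ) else 0) * (if t = c3 then (1:ℝ) else 0))
        + ((1 - v1) * (v2 / n) * (v3 / n)) * (if t = c1 then (1:ℝ) else 0)
        + ((v1 / n) * (1 - v2) * (v3 / n)) * (if t = c2 then (1:ℝ) else 0)
        + ((v1 / n) * (v2 / n) * (1 - v3)) * (if t = c3 then (1:ℝ) else 0)
        + (v1 / n) * (v2 / n) * (v3 / n) := fun t => by ring
  rw [Finset.sum_congr rfl (fun t _ => expand t)]
  rw [Finset.sum_add_distrib, Finset.sum_add_distrib, Finset.sum_add_distrib,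
    Finset.sum_add_distrib, Finset.sum_add_distrib, Finset.sum_add_distrib, Finset.sum_add_distrib,
    ← Finset.mul_sum, ← Finset.mul_sum, ← Finset.mul_sum, ← Finset.mul_sum,
    ← Finset.mul_sum, ← Finset.mul_sum, ← Finset.mul_sum,
    sum_ind3, sum_ind2, sum_ind2, sum_ind2, sum_ind1, sum_ind1, sum_ind1,
    Finset.sum_const, Finset.card_univ, Fintype.card_fin, nsmul_eq_mul]
  field_simp
  ring


lemma kernel_pair {N n : ℕ} (hn : 1 ≤ n) (p : Event N → ℝ) (u : ℝ)
    (x : Fin N → Fin n) (i j : Fin N) (hij : i ≠ j) :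
    ∑ y : Fin N → Fin n, transMat N n p u x y * (if y i = y j then (1:ℝ) else 0)
      = ∑ E : Event N, p E *
          ((1 - vv u E i) * (1 - vv u E j) * (if x (extMap E i) = x (extMap E j) then (1:ℝ) else 0)
            + (1 - (1 - vv u E i) * (1 - vv u E j)) / n) := by
  have step1 : ∀ y : Fin N → Fin n, transMat N n p u x y * (if y i = y j then (1:ℝ) else 0)
      = ∑ E : Event N, p E *
          ((∏ s, ((1 - vv u E s) * (if y s = x (extMap E s) then (1:ℝ) else 0) + vv u E s / n)) *
            (if y i = y j then (1:ℝ) else 0)) := by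
    intro y
    rw [transMat_eq, Finset.sum_mul]
    exact Finset.sum_congr rfl fun E _ => by ring
  rw [Finset.sum_congr rfl (fun y _ => step1 y), Finset.sum_comm]
  apply Finset.sum_congr rfl; intro E _
  rw [← Finset.mul_sum]
  congr 1
  rw [sum_states_pair (fun s a => (1 - vv u E s) * (if a = x (extMap E s) then (1:ℝ) else 0) + vv u E s / n)
      i j hij (fun s => hsum_one hn _ _)]
  exact sum_hh hn _ _ _ _

lemma kernel_triple {N n : ℕ} (hn : 1 ≤ n) (p : Event N → ℝ) (u : ℝ)
    (x : Fin N → Fin n) (i j k : Fin N) (hij : i ≠ j) (hik : i ≠ k) (hjk : j ≠ k) :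
    ∑ y : Fin N → Fin n, transMat N n p u x y * (if y i = y j ∧ y j = y k then (1:ℝ) else 0)
      = ∑ E : Event N, p E *
          ((1 - vv u E i) * (1 - vv u E j) * (1 - vv u E k) *
              (if x (extMap E i) = x (extMap E j) ∧ x (extMap E j) = x (extMap E k) then (1:ℝ) else 0)
            + ((1 - vv u E i) * (1 - vv u E j) * vv u E k *
                  (if x (extMap E i) = x (extMap E j) then (1:ℝ) else 0)
               + (1 - vv u E i) * vv u E j * (1 - vv u E k) *
                  (if x (extMap E i) = x (extMap E k) then (1:ℝ) else 0)
               + vv u E i * (1 - vv u E j) * (1 - vv u E k) *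
                  (if x (extMap E j) = x (extMap E k) then (1:ℝ) else 0)) / n
            + ((1 - vv u E i) * vv u E j * vv u E k + vv u E i * (1 - vv u E j) * vv u E k
               + vv u E i * vv u E j * (1 - vv u E k) + vv u E i * vv u E j * vv u E k) / n ^ 2) := by
  have step1 : ∀ y : Fin N → Fin n, transMat N n p u x y * (if y i = y j ∧ y j = y k then (1:ℝ) else 0)
      = ∑ E : Event N, p E *
          ((∏ s, ((1 - vv u E s) * (if y s = x (extMap E s) then (1:ℝ) else 0) + vv u E s / n)) *
            (if y i = y j ∧ y j = y k then (1:ℝ) else 0)) := by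
    intro y
    rw [transMat_eq, Finset.sum_mul]
    exact Finset.sum_congr rfl fun E _ => by ring
  rw [Finset.sum_congr rfl (fun y _ => step1 y), Finset.sum_comm]
  apply Finset.sum_congr rfl; intro E _
  rw [← Finset.mul_sum]
  congr 1
  rw [sum_states_triple (fun s a => (1 - vv u E s) * (if a = x (extMap E s) then (1:ℝ) else 0) + vv u E s / n)
      i j k hij hik hjk (fun s => hsum_one hn _ _)]
  exact sum_hhh hn _ _ _ _ _ _


-- Section G: abstract contraction and linear solve
def prodC {N : ℕ} {ι : Type*} (c : Event N → ι → ℝ) (g : Event N → ι → ι) :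
    List (Event N) → ι → ℝ
  | [], _ => 1
  | E :: L, z => c E z * prodC c g L (g E z)

lemma fixed_zero {N : ℕ} {ι : Type*} [Fintype ι] [Nonempty ι]
    (p : Event N → ℝ) (hp : IsDist p)
    (c : Event N → ι → ℝ) (g : Event N → ι → ι)
    (hc0 : ∀ E z, 0 ≤ c E z) (hc1 : ∀ E z, c E z ≤ 1)
    (L : List (Event N)) (hLp : ∀ E ∈ L, 0 < p E)
    (hkill : ∀ z, prodC c g L z = 0)
    (f : ι → ℝ) (hf : ∀ z, f z = ∑ E, p E * (c E z * f (g E z))) : f = 0 := by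
  have hp1 : ∀ E, p E ≤ 1 := by
    intro E
    rw [← hp.2]
    exact Finset.single_le_sum (fun a _ => hp.1 a) (mem_univ E)
  set M : ℝ := univ.sup' univ_nonempty (fun z => |f z|) with hM
  have hMle : ∀ z, |f z| ≤ M := fun z => Finset.le_sup' (fun z => |f z|) (mem_univ z)
  have hM0 : 0 ≤ M := le_trans (abs_nonneg _) (hMle (Classical.arbitrary ι))
  have hC01 : ∀ (L' : List (Event N)) (z : ι), 0 ≤ prodC c g L' z ∧ prodC c g L' z ≤ 1 := by
    intro L'
    induction L' with
    | nil => intro z; simp [prodC]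
    | cons E L' ih =>
      intro z
      obtain ⟨ih0, ih1⟩ := ih (g E z)
      refine ⟨mul_nonneg (hc0 E z) ih0, ?_⟩
      calc c E z * prodC c g L' (g E z) ≤ 1 * 1 := mul_le_mul (hc1 E z) ih1 ih0 zero_le_one
        _ = 1 := by ring
  have hP01 : ∀ L' : List (Event N), 0 ≤ (L'.map p).prod ∧ (L'.map p).prod ≤ 1 := by
    intro L'
    induction L' with
    | nil => simp
    | cons E L' ih =>
      simp only [List.map_cons, List.prod_cons]
      refine ⟨mul_nonneg (hp.1 E) ih.1, ?_⟩
      calc p E * (L'.map p).prod ≤ 1 * 1 := mul_le_mul (hp1 E) ih.2 ih.1 zero_le_one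
        _ = 1 := by ring
  have main : ∀ (L' : List (Event N)), (∀ E ∈ L', 0 < p E) → ∀ z,
      |f z| ≤ (1 - (L'.map p).prod * (1 - prodC c g L' z)) * M := by
    intro L'
    induction L' with
    | nil => intro _ z; simpa [prodC] using hMle z
    | cons E L' ih =>
      intro hpos z
      have hpE : 0 < p E := hpos E (by simp)
      have ihz := ih (fun E' hE' => hpos E' (by simp [hE'])) (g E z)
      have h1 : |f z| ≤ ∑ E', p E' * (c E' z * |f (g E' z)|) := by
        rw [hf z]
        refine (Finset.abs_sum_le_sum_abs _ _).trans ?_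
        apply Finset.sum_le_sum; intro E' _
        rw [abs_mul, abs_mul, abs_of_nonneg (hp.1 E'), abs_of_nonneg (hc0 E' z)]
      rw [← Finset.add_sum_erase _ _ (mem_univ E)] at h1
      have h2 : ∑ E' ∈ univ.erase E, p E' * (c E' z * |f (g E' z)|)
          ≤ ∑ E' ∈ univ.erase E, p E' * M := by
        apply Finset.sum_le_sum; intro E' _
        have h3 := hMle (g E' z)
        have h4 := hc1 E' z
        have h5 := hc0 E' z
        have h6 := hp.1 E'
        have h8 := abs_nonneg (f (g E' z))
        apply mul_le_mul_of_nonneg_left _ h6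
        exact le_trans (mul_le_of_le_one_left h8 h4) h3
      have h3 : ∑ E' ∈ univ.erase E, p E' * M = (1 - p E) * M := by
        rw [← Finset.sum_mul]
        congr 1
        have h4 : p E + ∑ E' ∈ univ.erase E, p E' = 1 := by
          rw [Finset.add_sum_erase _ _ (mem_univ E)]; exact hp.2
        linarith
      have h4 : p E * (c E z * |f (g E z)|)
          ≤ p E * (c E z * ((1 - (L'.map p).prod * (1 - prodC c g L' (g E z))) * M)) := by
        apply mul_le_mul_of_nonneg_left _ (le_of_lt hpE)
        exact mul_le_mul_of_nonneg_left ihz (hc0 E z)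
      simp only [prodC, List.map_cons, List.prod_cons]
      have hcz0 := hc0 E z
      have hcz1 := hc1 E z
      have hC := hC01 L' (g E z)
      have hP := hP01 L'
      have key : 0 ≤ M * (p E * ((1 - c E z) * (1 - (L'.map p).prod))) := by
        apply mul_nonneg hM0
        apply mul_nonneg (le_of_lt hpE)
        apply mul_nonneg <;> linarith [hP.2]
      nlinarith [h1, h2, h3, h4, key]
  obtain ⟨hkp0, _⟩ := hP01 L
  have hkPpos : 0 < (L.map p).prod := by
    apply List.prod_pos
    intro a ha
    obtain ⟨E, hE, rfl⟩ := List.mem_map.mp ha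
    exact hLp E hE
  have hMfinal : ∀ z, |f z| ≤ (1 - (L.map p).prod) * M := by
    intro z
    have := main L hLp z
    rw [hkill z] at this
    simpa using this
  have hMM : M ≤ (1 - (L.map p).prod) * M := by
    rw [hM]
    apply Finset.sup'_le
    intro z _
    exact hMfinal z
  have hMzero : M = 0 := by nlinarith
  funext z
  have := hMle z
  rw [hMzero] at this
  have := abs_nonneg (f z)
  simp only [Pi.zero_apply]
  have : |f z| = 0 := le_antisymm (by linarith) (abs_nonneg _)
  exact abs_eq_zero.mp this


noncomputable def Tmap {N : ℕ} {ι : Type*} [Fintype ι] (p : Event N → ℝ)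
    (c : Event N → ι → ℝ) (g : Event N → ι → ι) : (ι → ℝ) →ₗ[ℝ] (ι → ℝ) where
  toFun f := fun z => ∑ E, p E * (c E z * f (g E z))
  map_add' f1 f2 := by
    funext z
    simp only [Pi.add_apply, ← Finset.sum_add_distrib]
    exact Finset.sum_congr rfl fun E _ => by ring
  map_smul' r f := by
    funext z
    simp only [Pi.smul_apply, smul_eq_mul, RingHom.id_apply, Finset.mul_sum]
    exact Finset.sum_congr rfl fun E _ => by ring

lemma uniq_sol {N : ℕ} {ι : Type*} [Fintype ι] [Nonempty ι]
    (p : Event N → ℝ) (hp : IsDist p)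
    (c : Event N → ι → ℝ) (g : Event N → ι → ι)
    (hc0 : ∀ E z, 0 ≤ c E z) (hc1 : ∀ E z, c E z ≤ 1)
    (L : List (Event N)) (hLp : ∀ E ∈ L, 0 < p E)
    (hkill : ∀ z, prodC c g L z = 0)
    (φ : ι → ℝ) (f1 f2 : ι → ℝ)
    (h1 : ∀ z, f1 z = (∑ E, p E * (c E z * f1 (g E z))) + φ z)
    (h2 : ∀ z, f2 z = (∑ E, p E * (c E z * f2 (g E z))) + φ z) : f1 = f2 := by
  have hd : (fun z => f1 z - f2 z) = 0 := by
    apply fixed_zero p hp c g hc0 hc1 L hLp hkill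
    intro z
    rw [h1 z, h2 z, add_sub_add_right_eq_sub, ← Finset.sum_sub_distrib]
    exact Finset.sum_congr rfl fun E _ => by ring
  funext z
  have := congrFun hd z
  simpa [sub_eq_zero] using this

lemma exists_sol {N : ℕ} {ι : Type*} [Fintype ι] [Nonempty ι]
    (p : Event N → ℝ) (hp : IsDist p)
    (c : Event N → ι → ℝ) (g : Event N → ι → ι)
    (hc0 : ∀ E z, 0 ≤ c E z) (hc1 : ∀ E z, c E z ≤ 1)
    (L : List (Event N)) (hLp : ∀ E ∈ L, 0 < p E)
    (hkill : ∀ z, prodC c g L z = 0)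
    (φ : ι → ℝ) :
    ∃ f : ι → ℝ, ∀ z, f z = (∑ E, p E * (c E z * f (g E z))) + φ z := by
  classical
  set T := Tmap p c g with hT
  have hinj : Function.Injective (LinearMap.id (R := ℝ) (M := ι → ℝ) - T) := by
    rw [← LinearMap.ker_eq_bot, LinearMap.ker_eq_bot']
    intro f hf0
    apply fixed_zero p hp c g hc0 hc1 L hLp hkill
    intro z
    have := congrFun (congrArg (fun v => (v : ι → ℝ)) hf0) z
    simp only [LinearMap.sub_apply, LinearMap.id_apply, Pi.sub_apply, Pi.zero_apply] at this
    have hTz : T f z = ∑ E, p E * (c E z * f (g E z)) := rfl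
    linarith [this, hTz ▸ this]
  have hsurj : Function.Surjective (LinearMap.id (R := ℝ) (M := ι → ℝ) - T) :=
    LinearMap.injective_iff_surjective.mp hinj
  obtain ⟨f, hfeq⟩ := hsurj φ
  refine ⟨f, fun z => ?_⟩
  have := congrFun hfeq z
  simp only [LinearMap.sub_apply, LinearMap.id_apply, Pi.sub_apply] at this
  have hTz : T f z = ∑ E, p E * (c E z * f (g E z)) := rfl
  linarith [this, hTz ▸ this]



-- Section I: from the fixation axiom to a killing list
def mapL {N : ℕ} (L : List (Event N)) (j : Fin N) : Fin N :=
  L.foldl (fun a E => extMap E a) j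

lemma mapL_cons {N : ℕ} (E : Event N) (L : List (Event N)) (j : Fin N) :
    mapL (E :: L) j = mapL L (extMap E j) := rfl

lemma foldr_eq_mapL {N : ℕ} : ∀ (L : List (Event N)) (j : Fin N),
    ((L.map extMap).foldr (· ∘ ·) id) j = mapL L.reverse j := by
  intro L
  induction L with
  | nil => intro j; rfl
  | cons E L ih =>
    intro j
    have lhs : (((E :: L).map extMap).foldr (· ∘ ·) id) j
        = extMap E (((L.map extMap).foldr (· ∘ ·) id) j) := rfl
    rw [lhs, ih j, List.reverse_cons]
    show _ = mapL (L.reverse ++ [E]) j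
    unfold mapL
    rw [List.foldl_append]
    rfl

lemma fix_list {N : ℕ} (p : Event N → ℝ) (hfix : FixationAxiom p) :
    ∃ L : List (Event N), L ≠ [] ∧ (∀ E ∈ L, 0 < p E) ∧ ∃ i0, ∀ j, mapL L j = i0 := by
  obtain ⟨i0, m, Es, hm, hpos, _, hcomp⟩ := hfix
  refine ⟨(List.ofFn Es).reverse, ?_, ?_, i0, ?_⟩
  · intro h
    have : ((List.ofFn Es).reverse).length = 0 := by rw [h]; rfl
    simp at this
    omega
  · intro E hE
    rw [List.mem_reverse] at hE
    obtain ⟨k, hk⟩ := List.mem_ofFn.mp hE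
    exact hk ▸ hpos k
  · intro j
    have h1 := hcomp j
    have h2 : (List.ofFn fun k => extMap (Es k)) = (List.ofFn Es).map extMap := by
      rw [List.map_ofFn]
      rfl
    rw [h2, foldr_eq_mapL] at h1
    exact h1

lemma kill_gen {N : ℕ} {ι : Type*} (c : Event N → ι → ℝ) (g : Event N → ι → ι)
    (pr1 pr2 : ι → Fin N)
    (hgpr : ∀ E z, pr1 (g E z) = extMap E (pr1 z) ∧ pr2 (g E z) = extMap E (pr2 z))
    (hc : ∀ E z, extMap E (pr1 z) = extMap E (pr2 z) → c E z = 0) :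
    ∀ L : List (Event N), L ≠ [] → ∀ z, mapL L (pr1 z) = mapL L (pr2 z) →
      prodC c g L z = 0 := by
  intro L
  induction L with
  | nil => intro h; exact absurd rfl h
  | cons E L ih =>
    intro _ z hmap
    rw [mapL_cons, mapL_cons] at hmap
    by_cases hL : L = []
    · subst hL
      have : extMap E (pr1 z) = extMap E (pr2 z) := hmap
      show c E z * _ = 0
      rw [hc E z this, zero_mul]
    · show c E z * prodC c g L (g E z) = 0
      rw [ih hL (g E z) (by rw [(hgpr E z).1, (hgpr E z).2]; exact hmap), mul_zero]



lemma phi2_diag {N n : ℕ} (π : (Fin N → Fin n) → ℝ) (hπ : IsDist π) (i : Fin N) :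
    phi2 π i i = 1 := by
  unfold phi2
  simp [hπ.2]

-- Section J: the stationarity equation for phi2
lemma eq_pair {N n : ℕ} (hn : 1 ≤ n) (p : Event N → ℝ) (u : ℝ)
    (π : (Fin N → Fin n) → ℝ) (hπ : IsStationary (transMat N n p u) π)
    (i j : Fin N) (hij : i ≠ j) :
    phi2 π i j = ∑ E : Event N, p E *
      ((1 - vv u E i) * (1 - vv u E j) * phi2 π (extMap E i) (extMap E j)
        + (1 - (1 - vv u E i) * (1 - vv u E j)) / n) := by
  have h1 : phi2 π i j
      = ∑ y, (∑ x, π x * transMat N n p u x y) * (if y i = y j then (1:ℝ) else 0) := by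
    unfold phi2
    exact Finset.sum_congr rfl fun y _ => by rw [hπ.2 y]
  rw [h1]
  have h2 : ∀ y : Fin N → Fin n, (∑ x, π x * transMat N n p u x y) * (if y i = y j then (1:ℝ) else 0)
      = ∑ x, π x * (transMat N n p u x y * (if y i = y j then (1:ℝ) else 0)) := by
    intro y
    rw [Finset.sum_mul]
    exact Finset.sum_congr rfl fun x _ => by ring
  rw [Finset.sum_congr rfl fun y _ => h2 y, Finset.sum_comm]
  have h3 : ∀ x : Fin N → Fin n,
      ∑ y, π x * (transMat N n p u x y * (if y i = y j then (1:ℝ) else 0))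
      = π x * ∑ E : Event N, p E *
          ((1 - vv u E i) * (1 - vv u E j) * (if x (extMap E i) = x (extMap E j) then (1:ℝ) else 0)
            + (1 - (1 - vv u E i) * (1 - vv u E j)) / n) := by
    intro x
    rw [← Finset.mul_sum, kernel_pair hn p u x i j hij]
  rw [Finset.sum_congr rfl fun x _ => h3 x]
  have h4 : ∀ x : Fin N → Fin n, π x * (∑ E : Event N, p E *
          ((1 - vv u E i) * (1 - vv u E j) * (if x (extMap E i) = x (extMap E j) then (1:ℝ) else 0)
            + (1 - (1 - vv u E i) * (1 - vv u E j)) / n))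
      = ∑ E : Event N, (p E * ((1 - vv u E i) * (1 - vv u E j)) * (π x * (if x (extMap E i) = x (extMap E j) then (1:ℝ) else 0))
            + p E * ((1 - (1 - vv u E i) * (1 - vv u E j)) / n) * π x) := by
    intro x
    rw [Finset.mul_sum]
    exact Finset.sum_congr rfl fun E _ => by ring
  rw [Finset.sum_congr rfl fun x _ => h4 x, Finset.sum_comm]
  apply Finset.sum_congr rfl; intro E _
  rw [Finset.sum_add_distrib, ← Finset.mul_sum, ← Finset.mul_sum, hπ.1.2]
  show _ * phi2 π _ _ + _ = _
  ring

def c2 {N : ℕ} (u : ℝ) : Event N → (Fin N × Fin N) → ℝ := fun E z =>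
  if extMap E z.1 = extMap E z.2 then 0 else (1 - vv u E z.1) * (1 - vv u E z.2)

def g2 {N : ℕ} : Event N → (Fin N × Fin N) → (Fin N × Fin N) := fun E z =>
  (extMap E z.1, extMap E z.2)

noncomputable def r2 {N : ℕ} (p : Event N → ℝ) (u : ℝ) : (Fin N × Fin N) → ℝ := fun z =>
  if z.1 = z.2 then 1 else
    ∑ E : Event N, p E * (if extMap E z.1 = extMap E z.2 then (1 - vv u E z.1) * (1 - vv u E z.2) else 0)

noncomputable def s2 {N : ℕ} (p : Event N → ℝ) (u : ℝ) : (Fin N × Fin N) → ℝ := fun z =>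
  if z.1 = z.2 then 0 else
    ∑ E : Event N, p E * (1 - (1 - vv u E z.1) * (1 - vv u E z.2))

lemma eq_pair_full {N n : ℕ} (hn : 1 ≤ n) (p : Event N → ℝ) (u : ℝ)
    (π : (Fin N → Fin n) → ℝ) (hπ : IsStationary (transMat N n p u) π)
    (z : Fin N × Fin N) :
    phi2 π z.1 z.2 = (∑ E : Event N, p E * (c2 u E z * phi2 π (g2 E z).1 (g2 E z).2))
      + (r2 p u z + s2 p u z * (1 / n)) := by
  by_cases hz : z.1 = z.2
  · rw [hz, phi2_diag π hπ.1]
    unfold c2 r2 s2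
    rw [if_pos hz, if_pos hz]
    have : ∀ E : Event N, p E * ((if extMap E z.1 = extMap E z.2 then (0:ℝ)
        else (1 - vv u E z.1) * (1 - vv u E z.2)) * phi2 π (g2 E z).1 (g2 E z).2) = 0 := by
      intro E
      rw [hz, if_pos rfl]
      ring
    rw [Finset.sum_eq_zero fun E _ => this E]
    ring
  · rw [eq_pair hn p u π hπ z.1 z.2 hz]
    unfold c2 r2 s2 g2
    rw [if_neg hz, if_neg hz]
    rw [Finset.sum_mul, ← Finset.sum_add_distrib, ← Finset.sum_add_distrib]
    apply Finset.sum_congr rfl; intro E _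
    by_cases hE : extMap E z.1 = extMap E z.2
    · rw [if_pos hE, if_pos hE]
      show p E * (_ * phi2 π (extMap E z.1) (extMap E z.2) + _ / _) = _
      rw [hE, phi2_diag π hπ.1]
      ring
    · rw [if_neg hE, if_neg hE]
      show p E * (_ * phi2 π (extMap E z.1) (extMap E z.2) + _ / _)
        = p E * (_ * phi2 π (extMap E z.1) (extMap E z.2)) + (p E * _ + p E * _ * (1 / (n:ℝ)))
      ring


lemma c2_bounds {N : ℕ} {u : ℝ} (hu0 : 0 < u) (hu1 : u ≤ 1) (E : Event N) (z : Fin N × Fin N) :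
    0 ≤ c2 u E z ∧ c2 u E z ≤ 1 := by
  have h1 := vv_nonneg (le_of_lt hu0) E z.1
  have h2 := vv_nonneg (le_of_lt hu0) E z.2
  have h3 := vv_le (le_of_lt hu0) hu1 E z.1
  have h4 := vv_le (le_of_lt hu0) hu1 E z.2
  unfold c2
  split
  · norm_num
  · constructor
    · apply mul_nonneg <;> linarith
    · nlinarith

lemma partI {N : ℕ} (hN : 1 ≤ N)
    (p : Event N → ℝ) (hp : IsDist p) (hfix : FixationAxiom p)
    (u : ℝ) (hu0 : 0 < u) (hu1 : u ≤ 1)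
    (πn : (n : ℕ) → (Fin N → Fin n) → ℝ)
    (hπn : ∀ n : ℕ, 1 ≤ n → IsStationary (transMat N n p u) (πn n)) :
    ∃ A B : Fin N × Fin N → ℝ, ∀ n : ℕ, 1 ≤ n → ∀ z : Fin N × Fin N,
      phi2 (πn n) z.1 z.2 = A z + B z * (1 / n) := by
  haveI : Nonempty (Fin N) := ⟨⟨0, hN⟩⟩
  obtain ⟨L, hLne, hLp, i0, hmapL⟩ := fix_list p hfix
  have hc0 : ∀ (E : Event N) (z : Fin N × Fin N), 0 ≤ c2 u E z :=
    fun E z => (c2_bounds hu0 hu1 E z).1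
  have hc1 : ∀ (E : Event N) (z : Fin N × Fin N), c2 u E z ≤ 1 :=
    fun E z => (c2_bounds hu0 hu1 E z).2
  have hkill : ∀ z : Fin N × Fin N, prodC (c2 u) g2 L z = 0 := by
    intro z
    exact kill_gen (c2 u) g2 Prod.fst Prod.snd (fun E z => ⟨rfl, rfl⟩)
      (fun E z h => by simp [c2, h]) L hLne z (by rw [hmapL, hmapL])
  obtain ⟨A, hA⟩ := exists_sol p hp (c2 u) g2 hc0 hc1 L hLp hkill (r2 p u)
  obtain ⟨B, hB⟩ := exists_sol p hp (c2 u) g2 hc0 hc1 L hLp hkill (s2 p u)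
  refine ⟨A, B, fun n hn => ?_⟩
  have hstat := hπn n hn
  have heq1 : ∀ z, (fun z => phi2 (πn n) z.1 z.2) z
      = (∑ E : Event N, p E * (c2 u E z * (fun z => phi2 (πn n) z.1 z.2) (g2 E z)))
        + (fun z => r2 p u z + s2 p u z * (1 / n)) z :=
    fun z => eq_pair_full hn p u (πn n) hstat z
  have heq2 : ∀ z, (fun z => A z + B z * (1 / n)) z
      = (∑ E : Event N, p E * (c2 u E z * (fun z => A z + B z * (1 / n)) (g2 E z)))
        + (fun z => r2 p u z + s2 p u z * (1 / n)) z := by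
    intro z
    show A z + B z * (1 / n)
      = (∑ E : Event N, p E * (c2 u E z * (A (g2 E z) + B (g2 E z) * (1 / n)))) + _
    have hsplit : ∑ E : Event N, p E * (c2 u E z * (A (g2 E z) + B (g2 E z) * (1 / n)))
        = (∑ E : Event N, p E * (c2 u E z * A (g2 E z)))
          + (∑ E : Event N, p E * (c2 u E z * B (g2 E z))) * (1 / n) := by
      rw [Finset.sum_mul, ← Finset.sum_add_distrib]
      exact Finset.sum_congr rfl fun E _ => by ring
    rw [hsplit, hA z, hB z]
    ring
  have := uniq_sol p hp (c2 u) g2 hc0 hc1 L hLp hkill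
    (fun z => r2 p u z + s2 p u z * (1 / n))
    (fun z => phi2 (πn n) z.1 z.2) (fun z => A z + B z * (1 / n)) heq1 heq2
  exact fun z => congrFun this z


-- Section K: triple machinery
def d3 {N : ℕ} (z : Fin N × Fin N × Fin N) : Prop :=
  z.1 ≠ z.2.1 ∧ z.1 ≠ z.2.2 ∧ z.2.1 ≠ z.2.2

instance {N : ℕ} (z : Fin N × Fin N × Fin N) : Decidable (d3 z) := by
  unfold d3; infer_instance

def pairRed {N : ℕ} (z : Fin N × Fin N × Fin N) : Fin N × Fin N :=
  if z.1 = z.2.1 then (z.2.1, z.2.2) else (z.1, z.2.1)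

lemma phi3_red {N n : ℕ} (π : (Fin N → Fin n) → ℝ) (z : Fin N × Fin N × Fin N)
    (hz : ¬ d3 z) : phi3 π z.1 z.2.1 z.2.2 = phi2 π (pairRed z).1 (pairRed z).2 := by
  obtain ⟨i, j, k⟩ := z
  unfold d3 at hz
  push_neg at hz
  unfold pairRed phi3 phi2
  by_cases hij : i = j
  · subst hij
    simp only [if_pos rfl]
    apply Finset.sum_congr rfl; intro x _
    simp
  · simp only [if_neg hij]
    by_cases hik : i = k
    · subst hik
      apply Finset.sum_congr rfl; intro x _
      congr 1
      by_cases h : x i = x j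
      · rw [if_pos ⟨h, h.symm⟩, if_pos h]
      · rw [if_neg (fun hh => h hh.1), if_neg h]
    · have hjk : j = k := hz hij hik
      subst hjk
      apply Finset.sum_congr rfl; intro x _
      simp

def g3 {N : ℕ} : Event N → (Fin N × Fin N × Fin N) → (Fin N × Fin N × Fin N) := fun E z =>
  (extMap E z.1, extMap E z.2.1, extMap E z.2.2)

noncomputable def kap3 {N : ℕ} (u : ℝ) (E : Event N) (z : Fin N × Fin N × Fin N) : ℝ :=
  (1 - vv u E z.1) * (1 - vv u E z.2.1) * (1 - vv u E z.2.2)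

noncomputable def wa {N : ℕ} (u : ℝ) (E : Event N) (z : Fin N × Fin N × Fin N) : ℝ :=
  (1 - vv u E z.1) * (1 - vv u E z.2.1) * vv u E z.2.2

noncomputable def wb {N : ℕ} (u : ℝ) (E : Event N) (z : Fin N × Fin N × Fin N) : ℝ :=
  (1 - vv u E z.1) * vv u E z.2.1 * (1 - vv u E z.2.2)

noncomputable def wc {N : ℕ} (u : ℝ) (E : Event N) (z : Fin N × Fin N × Fin N) : ℝ :=
  vv u E z.1 * (1 - vv u E z.2.1) * (1 - vv u E z.2.2)

noncomputable def zc {N : ℕ} (u : ℝ) (E : Event N) (z : Fin N × Fin N × Fin N) : ℝ :=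
  (1 - vv u E z.1) * vv u E z.2.1 * vv u E z.2.2
  + vv u E z.1 * (1 - vv u E z.2.1) * vv u E z.2.2
  + vv u E z.1 * vv u E z.2.1 * (1 - vv u E z.2.2)
  + vv u E z.1 * vv u E z.2.1 * vv u E z.2.2

lemma eq_triple {N n : ℕ} (hn : 1 ≤ n) (p : Event N → ℝ) (u : ℝ)
    (π : (Fin N → Fin n) → ℝ) (hπ : IsStationary (transMat N n p u) π)
    (z : Fin N × Fin N × Fin N) (hd : d3 z) :
    phi3 π z.1 z.2.1 z.2.2 = ∑ E : Event N, p E *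
      (kap3 u E z * phi3 π (extMap E z.1) (extMap E z.2.1) (extMap E z.2.2)
        + (wa u E z * phi2 π (extMap E z.1) (extMap E z.2.1)
           + wb u E z * phi2 π (extMap E z.1) (extMap E z.2.2)
           + wc u E z * phi2 π (extMap E z.2.1) (extMap E z.2.2)) / n
        + zc u E z / n ^ 2) := by
  obtain ⟨i, jk⟩ := z
  obtain ⟨j, k⟩ := jk
  obtain ⟨hij, hik, hjk⟩ := hd
  simp only at hij hik hjk ⊢
  have h1 : phi3 π i j k
      = ∑ y, (∑ x, π x * transMat N n p u x y) * (if y i = y j ∧ y j = y k then (1:ℝ) else 0) := by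
    unfold phi3
    exact Finset.sum_congr rfl fun y _ => by rw [hπ.2 y]
  rw [h1]
  have h2 : ∀ y : Fin N → Fin n,
      (∑ x, π x * transMat N n p u x y) * (if y i = y j ∧ y j = y k then (1:ℝ) else 0)
      = ∑ x, π x * (transMat N n p u x y * (if y i = y j ∧ y j = y k then (1:ℝ) else 0)) := by
    intro y
    rw [Finset.sum_mul]
    exact Finset.sum_congr rfl fun x _ => by ring
  rw [Finset.sum_congr rfl fun y _ => h2 y, Finset.sum_comm]
  have h3 : ∀ x : Fin N → Fin n,
      ∑ y, π x * (transMat N n p u x y * (if y i = y j ∧ y j = y k then (1:ℝ) else 0))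
      = π x * ∑ E : Event N, p E *
          ((1 - vv u E i) * (1 - vv u E j) * (1 - vv u E k) *
              (if x (extMap E i) = x (extMap E j) ∧ x (extMap E j) = x (extMap E k) then (1:ℝ) else 0)
            + ((1 - vv u E i) * (1 - vv u E j) * vv u E k *
                  (if x (extMap E i) = x (extMap E j) then (1:ℝ) else 0)
               + (1 - vv u E i) * vv u E j * (1 - vv u E k) *
                  (if x (extMap E i) = x (extMap E k) then (1:ℝ) else 0)
               + vv u E i * (1 - vv u E j) * (1 - vv u E k) *
                  (if x (extMap E j) = x (extMap E k) then (1:ℝ) else 0)) / n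
            + ((1 - vv u E i) * vv u E j * vv u E k + vv u E i * (1 - vv u E j) * vv u E k
               + vv u E i * vv u E j * (1 - vv u E k) + vv u E i * vv u E j * vv u E k) / n ^ 2) := by
    intro x
    rw [← Finset.mul_sum, kernel_triple hn p u x i j k hij hik hjk]
  rw [Finset.sum_congr rfl fun x _ => h3 x]
  have h4 : ∀ x : Fin N → Fin n, π x * (∑ E : Event N, p E *
          ((1 - vv u E i) * (1 - vv u E j) * (1 - vv u E k) *
              (if x (extMap E i) = x (extMap E j) ∧ x (extMap E j) = x (extMap E k) then (1:ℝ) else 0)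
            + ((1 - vv u E i) * (1 - vv u E j) * vv u E k *
                  (if x (extMap E i) = x (extMap E j) then (1:ℝ) else 0)
               + (1 - vv u E i) * vv u E j * (1 - vv u E k) *
                  (if x (extMap E i) = x (extMap E k) then (1:ℝ) else 0)
               + vv u E i * (1 - vv u E j) * (1 - vv u E k) *
                  (if x (extMap E j) = x (extMap E k) then (1:ℝ) else 0)) / n
            + ((1 - vv u E i) * vv u E j * vv u E k + vv u E i * (1 - vv u E j) * vv u E k
               + vv u E i * vv u E j * (1 - vv u E k) + vv u E i * vv u E j * vv u E k) / n ^ 2))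
      = ∑ E : Event N,
          (p E * ((1 - vv u E i) * (1 - vv u E j) * (1 - vv u E k)) *
              (π x * (if x (extMap E i) = x (extMap E j) ∧ x (extMap E j) = x (extMap E k) then (1:ℝ) else 0))
            + (p E * ((1 - vv u E i) * (1 - vv u E j) * vv u E k / n)) *
                (π x * (if x (extMap E i) = x (extMap E j) then (1:ℝ) else 0))
            + (p E * ((1 - vv u E i) * vv u E j * (1 - vv u E k) / n)) *
                (π x * (if x (extMap E i) = x (extMap E k) then (1:ℝ) else 0))
            + (p E * (vv u E i * (1 - vv u E j) * (1 - vv u E k) / n)) *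
                (π x * (if x (extMap E j) = x (extMap E k) then (1:ℝ) else 0))
            + (p E * (((1 - vv u E i) * vv u E j * vv u E k + vv u E i * (1 - vv u E j) * vv u E k
               + vv u E i * vv u E j * (1 - vv u E k) + vv u E i * vv u E j * vv u E k) / n ^ 2)) * π x) := by
    intro x
    rw [Finset.mul_sum]
    exact Finset.sum_congr rfl fun E _ => by ring
  rw [Finset.sum_congr rfl fun x _ => h4 x, Finset.sum_comm]
  apply Finset.sum_congr rfl; intro E _
  rw [Finset.sum_add_distrib, Finset.sum_add_distrib, Finset.sum_add_distrib, Finset.sum_add_distrib,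
    ← Finset.mul_sum, ← Finset.mul_sum, ← Finset.mul_sum, ← Finset.mul_sum, ← Finset.mul_sum, hπ.1.2]
  show _ * phi3 π _ _ _ + _ * phi2 π _ _ + _ * phi2 π _ _ + _ * phi2 π _ _ + _ = _
  unfold kap3 wa wb wc zc
  ring


noncomputable def c3 {N : ℕ} (u : ℝ) : Event N → (Fin N × Fin N × Fin N) → ℝ := fun E z =>
  if d3 (g3 E z) then kap3 u E z else 0

lemma nd3_map {N : ℕ} (E : Event N) (z : Fin N × Fin N × Fin N) (hz : ¬ d3 z) :
    ¬ d3 (g3 E z) := by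
  intro hg
  exact hz ⟨fun e => hg.1 (congrArg (extMap E) e), fun e => hg.2.1 (congrArg (extMap E) e),
    fun e => hg.2.2 (congrArg (extMap E) e)⟩

noncomputable def R3 {N : ℕ} (p : Event N → ℝ) (u : ℝ) (A : Fin N × Fin N → ℝ) :
    (Fin N × Fin N × Fin N) → ℝ := fun z =>
  if d3 z then
    ∑ E : Event N, p E * (if d3 (g3 E z) then 0 else kap3 u E z * A (pairRed (g3 E z)))
  else A (pairRed z)

noncomputable def S3 {N : ℕ} (p : Event N → ℝ) (u : ℝ) (A B : Fin N × Fin N → ℝ) :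
    (Fin N × Fin N × Fin N) → ℝ := fun z =>
  if d3 z then
    ∑ E : Event N, p E * ((if d3 (g3 E z) then 0 else kap3 u E z * B (pairRed (g3 E z)))
      + wa u E z * A ((g3 E z).1, (g3 E z).2.1)
      + wb u E z * A ((g3 E z).1, (g3 E z).2.2)
      + wc u E z * A ((g3 E z).2.1, (g3 E z).2.2))
  else B (pairRed z)

noncomputable def U3 {N : ℕ} (p : Event N → ℝ) (u : ℝ) (B : Fin N × Fin N → ℝ) :
    (Fin N × Fin N × Fin N) → ℝ := fun z =>
  if d3 z then
    ∑ E : Event N, p E * (wa u E z * B ((g3 E z).1, (g3 E z).2.1)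
      + wb u E z * B ((g3 E z).1, (g3 E z).2.2)
      + wc u E z * B ((g3 E z).2.1, (g3 E z).2.2)
      + zc u E z)
  else 0

lemma eq_triple_full {N n : ℕ} (hn : 1 ≤ n) (p : Event N → ℝ) (u : ℝ)
    (π : (Fin N → Fin n) → ℝ) (hπ : IsStationary (transMat N n p u) π)
    (A B : Fin N × Fin N → ℝ)
    (hAB : ∀ z : Fin N × Fin N, phi2 π z.1 z.2 = A z + B z * (1 / n))
    (z : Fin N × Fin N × Fin N) :
    phi3 π z.1 z.2.1 z.2.2
      = (∑ E : Event N, p E * (c3 u E z * phi3 π (g3 E z).1 (g3 E z).2.1 (g3 E z).2.2))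
        + (R3 p u A z + S3 p u A B z * (1 / n) + U3 p u B z * (1 / n) ^ 2) := by
  have hn0 : (n:ℝ) ≠ 0 := Nat.cast_ne_zero.mpr (by omega)
  by_cases hd : d3 z
  · rw [eq_triple hn p u π hπ z hd]
    unfold R3 S3 U3
    rw [if_pos hd, if_pos hd, if_pos hd]
    rw [Finset.sum_mul, Finset.sum_mul, ← Finset.sum_add_distrib, ← Finset.sum_add_distrib,
      ← Finset.sum_add_distrib]
    apply Finset.sum_congr rfl; intro E _
    have hab := hAB ((g3 E z).1, (g3 E z).2.1)
    have hac := hAB ((g3 E z).1, (g3 E z).2.2)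
    have hbc := hAB ((g3 E z).2.1, (g3 E z).2.2)
    simp only at hab hac hbc
    show p E * (kap3 u E z * phi3 π (extMap E z.1) (extMap E z.2.1) (extMap E z.2.2)
        + (wa u E z * phi2 π (extMap E z.1) (extMap E z.2.1)
           + wb u E z * phi2 π (extMap E z.1) (extMap E z.2.2)
           + wc u E z * phi2 π (extMap E z.2.1) (extMap E z.2.2)) / n
        + zc u E z / n ^ 2) = _
    have hg1 : (g3 E z).1 = extMap E z.1 := rfl
    have hg2 : (g3 E z).2.1 = extMap E z.2.1 := rfl
    have hg3 : (g3 E z).2.2 = extMap E z.2.2 := rfl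
    simp only [hg1, hg2, hg3] at hab hac hbc ⊢
    rw [hab, hac, hbc]
    by_cases hg : d3 (g3 E z)
    · rw [show c3 u E z = kap3 u E z from if_pos hg, if_pos hg, if_pos hg]
      show _ = p E * (kap3 u E z * phi3 π (extMap E z.1) (extMap E z.2.1) (extMap E z.2.2))
        + (p E * 0 + _ + _)
      field_simp
      ring
    · rw [show c3 u E z = 0 from if_neg hg, if_neg hg, if_neg hg]
      have hred := phi3_red π (g3 E z) hg
      rw [hg1, hg2, hg3] at hred
      rw [hred, hAB (pairRed (g3 E z))]
      field_simp
      ring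
  · have hred := phi3_red π z hd
    rw [hred, hAB (pairRed z)]
    unfold R3 S3 U3
    rw [if_neg hd, if_neg hd, if_neg hd]
    have hzero : ∀ E : Event N, p E * (c3 u E z * phi3 π (g3 E z).1 (g3 E z).2.1 (g3 E z).2.2) = 0 := by
      intro E
      rw [show c3 u E z = 0 from if_neg (nd3_map E z hd)]
      ring
    rw [Finset.sum_eq_zero fun E _ => hzero E]
    ring


lemma kap3_bounds {N : ℕ} {u : ℝ} (hu0 : 0 < u) (hu1 : u ≤ 1) (E : Event N)
    (z : Fin N × Fin N × Fin N) : 0 ≤ kap3 u E z ∧ kap3 u E z ≤ 1 := by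
  have h1 := vv_nonneg (le_of_lt hu0) E z.1
  have h2 := vv_nonneg (le_of_lt hu0) E z.2.1
  have h3 := vv_nonneg (le_of_lt hu0) E z.2.2
  have h4 := vv_le (le_of_lt hu0) hu1 E z.1
  have h5 := vv_le (le_of_lt hu0) hu1 E z.2.1
  have h6 := vv_le (le_of_lt hu0) hu1 E z.2.2
  unfold kap3
  have ha : 0 ≤ (1 - vv u E z.1) * (1 - vv u E z.2.1) := mul_nonneg (by linarith) (by linarith)
  have hb : (1 - vv u E z.1) * (1 - vv u E z.2.1) ≤ 1 := by nlinarith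
  constructor
  · exact mul_nonneg ha (by linarith)
  · nlinarith

lemma c3_bounds {N : ℕ} {u : ℝ} (hu0 : 0 < u) (hu1 : u ≤ 1) (E : Event N)
    (z : Fin N × Fin N × Fin N) : 0 ≤ c3 u E z ∧ c3 u E z ≤ 1 := by
  unfold c3
  split
  · exact kap3_bounds hu0 hu1 E z
  · norm_num

lemma partII {N : ℕ} (hN : 1 ≤ N)
    (p : Event N → ℝ) (hp : IsDist p) (hfix : FixationAxiom p)
    (u : ℝ) (hu0 : 0 < u) (hu1 : u ≤ 1)
    (πn : (n : ℕ) → (Fin N → Fin n) → ℝ)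
    (hπn : ∀ n : ℕ, 1 ≤ n → IsStationary (transMat N n p u) (πn n))
    (A B : Fin N × Fin N → ℝ)
    (hAB : ∀ n : ℕ, 1 ≤ n → ∀ z : Fin N × Fin N, phi2 (πn n) z.1 z.2 = A z + B z * (1 / n)) :
    ∃ C D F : Fin N × Fin N × Fin N → ℝ, ∀ n : ℕ, 1 ≤ n → ∀ z : Fin N × Fin N × Fin N,
      phi3 (πn n) z.1 z.2.1 z.2.2 = C z + D z * (1 / n) + F z * (1 / n) ^ 2 := by
  haveI : Nonempty (Fin N) := ⟨⟨0, hN⟩⟩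
  obtain ⟨L, hLne, hLp, i0, hmapL⟩ := fix_list p hfix
  have hc0 : ∀ (E : Event N) (z : Fin N × Fin N × Fin N), 0 ≤ c3 u E z :=
    fun E z => (c3_bounds hu0 hu1 E z).1
  have hc1 : ∀ (E : Event N) (z : Fin N × Fin N × Fin N), c3 u E z ≤ 1 :=
    fun E z => (c3_bounds hu0 hu1 E z).2
  have hkill : ∀ z : Fin N × Fin N × Fin N, prodC (c3 u) g3 L z = 0 := by
    intro z
    refine kill_gen (c3 u) g3 (fun z => z.1) (fun z => z.2.1) (fun E z => ⟨rfl, rfl⟩)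
      (fun E z h => ?_) L hLne z (by rw [hmapL, hmapL])
    unfold c3
    rw [if_neg (fun hg => hg.1 h)]
  obtain ⟨C, hC⟩ := exists_sol p hp (c3 u) g3 hc0 hc1 L hLp hkill (R3 p u A)
  obtain ⟨D, hD⟩ := exists_sol p hp (c3 u) g3 hc0 hc1 L hLp hkill (S3 p u A B)
  obtain ⟨F, hF⟩ := exists_sol p hp (c3 u) g3 hc0 hc1 L hLp hkill (U3 p u B)
  refine ⟨C, D, F, fun n hn => ?_⟩
  have hstat := hπn n hn
  have heq1 : ∀ z, (fun z => phi3 (πn n) z.1 z.2.1 z.2.2) z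
      = (∑ E : Event N, p E * (c3 u E z * (fun z => phi3 (πn n) z.1 z.2.1 z.2.2) (g3 E z)))
        + (fun z => R3 p u A z + S3 p u A B z * (1 / n) + U3 p u B z * (1 / n) ^ 2) z :=
    fun z => eq_triple_full hn p u (πn n) hstat A B (hAB n hn) z
  have heq2 : ∀ z, (fun z => C z + D z * (1 / n) + F z * (1 / n) ^ 2) z
      = (∑ E : Event N, p E * (c3 u E z * (fun z => C z + D z * (1 / n) + F z * (1 / n) ^ 2) (g3 E z)))
        + (fun z => R3 p u A z + S3 p u A B z * (1 / n) + U3 p u B z * (1 / n) ^ 2) z := by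
    intro z
    show C z + D z * (1 / n) + F z * (1 / n) ^ 2
      = (∑ E : Event N, p E * (c3 u E z * (C (g3 E z) + D (g3 E z) * (1 / n) + F (g3 E z) * (1 / n) ^ 2))) + _
    have hsplit : ∑ E : Event N, p E * (c3 u E z * (C (g3 E z) + D (g3 E z) * (1 / n) + F (g3 E z) * (1 / n) ^ 2))
        = (∑ E : Event N, p E * (c3 u E z * C (g3 E z)))
          + (∑ E : Event N, p E * (c3 u E z * D (g3 E z))) * (1 / n)
          + (∑ E : Event N, p E * (c3 u E z * F (g3 E z))) * (1 / n) ^ 2 := by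
      rw [Finset.sum_mul, Finset.sum_mul, ← Finset.sum_add_distrib, ← Finset.sum_add_distrib]
      exact Finset.sum_congr rfl fun E _ => by ring
    rw [hsplit, hC z, hD z, hF z]
    ring
  have := uniq_sol p hp (c3 u) g3 hc0 hc1 L hLp hkill
    (fun z => R3 p u A z + S3 p u A B z * (1 / n) + U3 p u B z * (1 / n) ^ 2)
    (fun z => phi3 (πn n) z.1 z.2.1 z.2.2)
    (fun z => C z + D z * (1 / n) + F z * (1 / n) ^ 2) heq1 heq2
  exact fun z => congrFun this z

/-- for a fixed neutral replacement rule and mutation rate,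
`n·φ_ij(n)` is an affine function of the number `n` of strategies, and
`n²·φ_ijk(n)` is a quadratic function of `n`. -/
theorem stmt19 (N : ℕ) (hN : 1 ≤ N)
    (p : Event N → ℝ) (hp : IsDist p) (hfix : FixationAxiom p)
    (u : ℝ) (hu0 : 0 < u) (hu1 : u ≤ 1)
    (πn : (n : ℕ) → (Fin N → Fin n) → ℝ)
    (hπn : ∀ n : ℕ, 1 ≤ n →
      IsStationary (transMat N n p u) (πn n) ∧
      ∀ π', IsStationary (transMat N n p u) π' → π' = πn n) :
    (∀ i j : Fin N, ∃ a b : ℝ, ∀ n : ℕ, 1 ≤ n →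
        (n:ℝ) * phi2 (πn n) i j = a * (n:ℝ) + b) ∧
    (∀ i j k : Fin N, ∃ c d e : ℝ, ∀ n : ℕ, 1 ≤ n →
        (n:ℝ)^2 * phi3 (πn n) i j k = c * (n:ℝ)^2 + d * (n:ℝ) + e) := by
  have hstat : ∀ n : ℕ, 1 ≤ n → IsStationary (transMat N n p u) (πn n) :=
    fun n hn => (hπn n hn).1
  obtain ⟨A, B, hAB⟩ := partI hN p hp hfix u hu0 hu1 πn hstat
  obtain ⟨C, D, F, hCDF⟩ := partII hN p hp hfix u hu0 hu1 πn hstat A B hAB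
  constructor
  · intro i j
    refine ⟨A (i, j), B (i, j), fun n hn => ?_⟩
    have h := hAB n hn (i, j)
    simp only at h
    have hn0 : (n:ℝ) ≠ 0 := Nat.cast_ne_zero.mpr (by omega)
    rw [h]
    field_simp
  · intro i j k
    refine ⟨C (i, j, k), D (i, j, k), F (i, j, k), fun n hn => ?_⟩
    have h := hCDF n hn (i, j, k)
    simp only at h
    have hn0 : (n:ℝ) ≠ 0 := Nat.cast_ne_zero.mpr (by omega)
    rw [h]
    field_simp

end SCT
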